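/- (Ceva's theorem for translation triangles in Nil.) Let A₀, A₁, A₂ ∈ ℝ³ be points of Nil whose fibre projections π(A₀), π(A₁), π(A₂) are affinely independent in ℝ². For (i,j) ∈ {(0,1),(1,2),(2,0)} let γ_{ij} be the Nil translation curve with γ_{ij}(0) = A_i and γ_{ij}(1) = A_j. Let P = γ₀₁(p), Q = γ₁₂(q), R = γ₂₀(r) with p, q, r ∉ {0, 1}. Suppose there exists a point T^p ∈ ℝ², not lying on any of the three Euclidean lines through pairs π(A_i), π(A_j), such that T^p lies on the Euclidean line through π(A₀) and π(Q), on the line through π(A₁) and π(R), and on the line through π(A₂) and π(P) (this is the fibre projection of the condition that the connecting curves A₀T, A₁T, A₂T on the translation-triangle surface pass through a common point T and meet the opposite side curves in Q, R, P). Then the Nil simple ratios satisfy (p/(1−p)) · (q/(1−q)) · (r/(1−r)) = 1. -/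

import Mathlib

lemma mem_pair_iff (a b t : ℝ × ℝ) :
    t ∈ affineSpan ℝ {a, b} ↔ ∃ s : ℝ, s • (b - a) = t - a := by
  rw [show t = (t -ᵥ a) +ᵥ a from (vsub_vadd t a).symm]
  rw [vadd_left_mem_affineSpan_pair]
  simp [vsub_eq_sub, vadd_eq_add, sub_add_cancel]

lemma cross_of_mem (a b t : ℝ × ℝ) (h : t ∈ affineSpan ℝ {a, b}) :
    (t.1 - a.1) * (b.2 - a.2) - (t.2 - a.2) * (b.1 - a.1) = 0 := by
  obtain ⟨s, hs⟩ := (mem_pair_iff a b t).mp h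
  have h1 : s * (b.1 - a.1) = t.1 - a.1 := congrArg Prod.fst hs
  have h2 : s * (b.2 - a.2) = t.2 - a.2 := congrArg Prod.snd hs
  linear_combination (b.1 - a.1) * h2 - (b.2 - a.2) * h1

lemma cross_ne_of_not_mem (a b t : ℝ × ℝ) (hab : a ≠ b)
    (h : t ∉ affineSpan ℝ {a, b}) :
    (t.1 - a.1) * (b.2 - a.2) - (t.2 - a.2) * (b.1 - a.1) ≠ 0 := by
  intro hc
  apply h
  have hden : (b.1 - a.1) ^ 2 + (b.2 - a.2) ^ 2 ≠ 0 := by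
    intro h0
    apply hab
    have e1 : b.1 - a.1 = 0 := by nlinarith [sq_nonneg (b.1 - a.1), sq_nonneg (b.2 - a.2)]
    have e2 : b.2 - a.2 = 0 := by nlinarith [sq_nonneg (b.1 - a.1), sq_nonneg (b.2 - a.2)]
    exact Prod.ext (by linarith) (by linarith)
  refine (mem_pair_iff a b t).mpr ⟨((t.1 - a.1) * (b.1 - a.1) + (t.2 - a.2) * (b.2 - a.2)) /
    ((b.1 - a.1) ^ 2 + (b.2 - a.2) ^ 2), ?_⟩
  refine Prod.ext ?_ ?_
  · show _ * (b.1 - a.1) = t.1 - a.1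
    rw [div_mul_eq_mul_div, div_eq_iff hden]
    linear_combination (-(b.2 - a.2)) * hc
  · show _ * (b.2 - a.2) = t.2 - a.2
    rw [div_mul_eq_mul_div, div_eq_iff hden]
    linear_combination (b.1 - a.1) * hc



/-- The Nil translation curve starting at `P = (p,q,r)` with direction `(u,v,w)`. -/
noncomputable def nilCurve (P d : ℝ × ℝ × ℝ) : ℝ → ℝ × ℝ × ℝ :=
  fun t =>
    (P.1 + d.1 * t,
     P.2.1 + d.2.1 * t,
     P.2.2 + P.1 * d.2.1 * t + d.1 * d.2.1 * t ^ 2 / 2 + d.2.2 * t)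

/-- The unique Nil translation curve `γ` with `γ(0) = A` and `γ(1) = B`. -/
noncomputable def nilCurveThrough (A B : ℝ × ℝ × ℝ) : ℝ → ℝ × ℝ × ℝ :=
  nilCurve A
    (B.1 - A.1, B.2.1 - A.2.1,
     B.2.2 - A.2.2 - A.1 * (B.2.1 - A.2.1) - (B.1 - A.1) * (B.2.1 - A.2.1) / 2)

/-- The fibre projection `π(a,b,c) = (a,b)`. -/
def fibreProj : ℝ × ℝ × ℝ → ℝ × ℝ := fun q => (q.1, q.2.1)

/-- **Ceva's theorem for translation triangles in Nil.**
If the connecting curves from the vertices of a Nil translation triangle through a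
common point `T` of its surface meet the opposite side translation curves in
`Q`, `R`, `P` (expressed, via the fibre projection, by the concurrence of the
corresponding Euclidean lines at the projection `T^p` of `T`), then the product of
the three Nil simple ratios `p/(1−p)`, `q/(1−q)`, `r/(1−r)` equals `1`. -/
theorem nil_ceva
    (A₀ A₁ A₂ : ℝ × ℝ × ℝ)
    (hind : AffineIndependent ℝ ![fibreProj A₀, fibreProj A₁, fibreProj A₂])
    (p q r : ℝ) (hp0 : p ≠ 0) (hp1 : p ≠ 1) (hq0 : q ≠ 0) (hq1 : q ≠ 1)
    (hr0 : r ≠ 0) (hr1 : r ≠ 1)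
    (P Q R : ℝ × ℝ × ℝ)
    (hP : P = nilCurveThrough A₀ A₁ p)
    (hQ : Q = nilCurveThrough A₁ A₂ q)
    (hR : R = nilCurveThrough A₂ A₀ r)
    (T : ℝ × ℝ)
    (hT01 : T ∉ affineSpan ℝ {fibreProj A₀, fibreProj A₁})
    (hT12 : T ∉ affineSpan ℝ {fibreProj A₁, fibreProj A₂})
    (hT20 : T ∉ affineSpan ℝ {fibreProj A₂, fibreProj A₀})
    (h0 : T ∈ affineSpan ℝ {fibreProj A₀, fibreProj Q})
    (h1 : T ∈ affineSpan ℝ {fibreProj A₁, fibreProj R})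
    (h2 : T ∈ affineSpan ℝ {fibreProj A₂, fibreProj P}) :
    (p / (1 - p)) * (q / (1 - q)) * (r / (1 - r)) = 1 := by
  subst hP hQ hR
  have hab01 : fibreProj A₀ ≠ fibreProj A₁ := by
    intro h
    exact (by decide : (0 : Fin 3) ≠ 1) (hind.injective (by simpa using h))
  have hab12 : fibreProj A₁ ≠ fibreProj A₂ := by
    intro h
    exact (by decide : (1 : Fin 3) ≠ 2) (hind.injective (by simpa using h))
  have hab20 : fibreProj A₂ ≠ fibreProj A₀ := by
    intro h
    exact (by decide : (2 : Fin 3) ≠ 0) (hind.injective (by simpa using h))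
  have hc01 := cross_ne_of_not_mem _ _ _ hab01 hT01
  have hc12 := cross_ne_of_not_mem _ _ _ hab12 hT12
  have hc20 := cross_ne_of_not_mem _ _ _ hab20 hT20
  have m0 := cross_of_mem _ _ _ h0
  have m1 := cross_of_mem _ _ _ h1
  have m2 := cross_of_mem _ _ _ h2
  simp only [fibreProj, nilCurveThrough, nilCurve] at hc01 hc12 hc20 m0 m1 m2
  have h1p : (1 : ℝ) - p ≠ 0 := sub_ne_zero.mpr (Ne.symm hp1)
  have h1q : (1 : ℝ) - q ≠ 0 := sub_ne_zero.mpr (Ne.symm hq1)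
  have h1r : (1 : ℝ) - r ≠ 0 := sub_ne_zero.mpr (Ne.symm hr1)
  set x0 := A₀.1; set y0 := A₀.2.1
  set x1 := A₁.1; set y1 := A₁.2.1
  set x2 := A₂.1; set y2 := A₂.2.1
  set c01 := (T.1 - x0) * (y1 - y0) - (T.2 - y0) * (x1 - x0) with hc01def
  set c12 := (T.1 - x1) * (y2 - y1) - (T.2 - y1) * (x2 - x1) with hc12def
  set c20 := (T.1 - x2) * (y0 - y2) - (T.2 - y2) * (x0 - x2) with hc20def
  have ratp : p / (1 - p) = c20 / c12 := by
    rw [div_eq_div_iff h1p hc12]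
    linear_combination -m2
  have ratq : q / (1 - q) = c01 / c20 := by
    rw [div_eq_div_iff h1q hc20]
    linear_combination -m0
  have ratr : r / (1 - r) = c12 / c01 := by
    rw [div_eq_div_iff h1r hc01]
    linear_combination -m1
  rw [ratp, ratq, ratr]
  field_simp
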